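/- arXiv:2101.03130 — 2 statements merged into one kernel-verified Lean document; each statement's English description precedes it below -/
import Mathlib

section
/- Suppose 2·1_R is not a zero divisor in R, and let N be any positive integer. An R-linear derivation D on R[X_1,…,X_N] satisfies D(X·X) = 0 if and only if there exist polynomials c_{jk} ∈ R[X_1,…,X_N] (for 1 ≤ j < k ≤ N) such that D(p) = Σ_{1≤j<k≤N} c_{jk}·M_{jk}(p) for all p ∈ R[X_1,…,X_N]. -/
open MvPolynomial

/-- The rotation generator `M_{jk} p = X_j ∂_k p − X_k ∂_j p`. -/
noncomputable def rot {R : Type*} [CommRing R] {N : ℕ} (j k : Fin N)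
    (p : MvPolynomial (Fin N) R) : MvPolynomial (Fin N) R :=
  X j * pderiv k p - X k * pderiv j p

/-- The Laplacian `Δ p = Σ_j ∂_j² p`. -/
noncomputable def lap {R : Type*} [CommRing R] {N : ℕ}
    (p : MvPolynomial (Fin N) R) : MvPolynomial (Fin N) R :=
  ∑ j, pderiv j (pderiv j p)

/-- The polynomial `X·X = X_1² + ⋯ + X_N²`. -/
noncomputable def XX (R : Type*) [CommRing R] (N : ℕ) : MvPolynomial (Fin N) R :=
  ∑ j, X j ^ 2

section Aux

variable {R : Type*} [CommRing R] {N : ℕ}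

/-- Keep the monomials of `q` that contain `X j` and no variable of smaller index;
divide the result by `X j`. -/
noncomputable def Eop (j : Fin N) (q : MvPolynomial (Fin N) R) : MvPolynomial (Fin N) R :=
  ∑ β ∈ q.support,
    if β j ≠ 0 ∧ ∀ k, k < j → β k = 0 then monomial (β - Finsupp.single j 1) (coeff β q) else 0

lemma coeff_Eop (j : Fin N) (q : MvPolynomial (Fin N) R) (γ : Fin N →₀ ℕ) :
    coeff γ (Eop j q) =
      if ∀ k, k < j → γ k = 0 then coeff (γ + Finsupp.single j 1) q else 0 := by
  rw [Eop, coeff_sum]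
  simp only [apply_ite (coeff γ), coeff_monomial, coeff_zero]
  by_cases h : ∀ k, k < j → γ k = 0
  · rw [if_pos h]
    set β₀ := γ + Finsupp.single j 1 with hβ₀
    have hcond : β₀ j ≠ 0 ∧ ∀ k, k < j → β₀ k = 0 := by
      constructor
      · simp [hβ₀]
      · intro k hk
        have h1 : β₀ k = γ k + (Finsupp.single j 1) k := rfl
        rw [h1, Finsupp.single_apply, if_neg (ne_of_gt hk), h k hk]
        rfl
    have hsub : β₀ - Finsupp.single j 1 = γ := by simp [hβ₀]
    have key : ∀ β ∈ q.support, β ≠ β₀ →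
        (if β j ≠ 0 ∧ ∀ k, k < j → β k = 0 then
          (if β - Finsupp.single j 1 = γ then coeff β q else 0) else 0) = 0 := by
      intro β _ hne
      split_ifs with hc heq
      · exfalso
        apply hne
        have hle : Finsupp.single j 1 ≤ β := by
          rw [Finsupp.single_le_iff]; omega
        rw [hβ₀, ← heq, tsub_add_cancel_of_le hle]
      · rfl
      · rfl
    by_cases hβ : β₀ ∈ q.support
    · rw [Finset.sum_eq_single_of_mem β₀ hβ key, if_pos hcond, if_pos hsub]
    · rw [Finset.sum_eq_zero (fun β hβm => key β hβm (fun h' => hβ (h' ▸ hβm)))]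
      exact ((MvPolynomial.notMem_support_iff).mp hβ).symm
  · rw [if_neg h]
    apply Finset.sum_eq_zero
    intro β hβ
    split_ifs with hc heq
    · exfalso
      apply h
      intro k hk
      rw [← heq, Finsupp.tsub_apply, Finsupp.single_apply, if_neg (ne_of_gt hk), hc.2 k hk]
      rfl
    · rfl
    · rfl

/-- The skew matrix of coefficient polynomials built from a syzygy of the variables. -/
noncomputable def dmat (a : Fin N → MvPolynomial (Fin N) R) (i j : Fin N) :
    MvPolynomial (Fin N) R :=
  if j < i then Eop j (a i) else if i < j then -(Eop i (a j)) else 0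

lemma dmat_skew (a : Fin N → MvPolynomial (Fin N) R) (i j : Fin N) :
    dmat a j i = -(dmat a i j) := by
  unfold dmat
  rcases lt_trichotomy i j with h | h | h
  · rw [if_pos h, if_neg (asymm h), if_pos h, neg_neg]
  · subst h; simp
  · rw [if_neg (asymm h), if_pos h, if_pos h]

lemma dmat_diag (a : Fin N → MvPolynomial (Fin N) R) (i : Fin N) : dmat a i i = 0 := by
  unfold dmat; simp

/-- Exactness of the Koszul complex in degree one: any syzygy of the variables comes
from a skew-symmetric matrix. -/
lemma syzygy (a : Fin N → MvPolynomial (Fin N) R) (h : ∑ k, X k * a k = 0) (i : Fin N) :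
    a i = ∑ j, dmat a i j * X j := by
  apply MvPolynomial.ext
  intro α
  rw [coeff_sum]
  have hterm : ∀ j, coeff α (dmat a i j * X j) =
      if α j ≠ 0 then coeff (α - Finsupp.single j 1) (dmat a i j) else 0 := by
    intro j
    rw [coeff_mul_X']
    simp [Finsupp.mem_support_iff]
  by_cases hA : ∃ k, k < i ∧ α k ≠ 0
  · -- case A : the minimal element j0 of the support of α satisfies j0 < i
    have hns : α.support.Nonempty := by
      obtain ⟨k, _, hk⟩ := hA
      exact ⟨k, Finsupp.mem_support_iff.mpr hk⟩
    set j0 := α.support.min' hns with hj0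
    have hj0mem : j0 ∈ α.support := α.support.min'_mem hns
    have hj0ne : α j0 ≠ 0 := Finsupp.mem_support_iff.mp hj0mem
    have hj0min : ∀ k, α k ≠ 0 → j0 ≤ k := fun k hk =>
      α.support.min'_le k (Finsupp.mem_support_iff.mpr hk)
    have hj0lt : j0 < i := by
      obtain ⟨k, hki, hk⟩ := hA
      exact lt_of_le_of_lt (hj0min k hk) hki
    have hbelow : ∀ k, k < j0 → α k = 0 := by
      intro k hk
      by_contra hne
      exact absurd (hj0min k hne) (not_le.mpr hk)
    rw [Finset.sum_eq_single_of_mem j0 (Finset.mem_univ j0)]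
    · rw [hterm, if_pos hj0ne]
      unfold dmat
      rw [if_pos hj0lt, coeff_Eop, if_pos, tsub_add_cancel_of_le]
      · rw [Finsupp.single_le_iff]; omega
      · intro k hk
        rw [Finsupp.tsub_apply, Finsupp.single_apply, if_neg (ne_of_gt hk), hbelow k hk]
        rfl
    · intro j _ hne
      rw [hterm]
      split_ifs with hαj
      · unfold dmat
        rcases lt_trichotomy j i with hji | hji | hji
        · rw [if_pos hji, coeff_Eop, if_neg]
          intro hall
          apply hne
          have hle : j ≤ j0 := by
            by_contra hgt
            push_neg at hgt
            have hz := hall j0 hgt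
            rw [Finsupp.tsub_apply, Finsupp.single_apply, if_neg hne] at hz
            simp only [Nat.sub_zero] at hz
            exact hj0ne hz
          exact le_antisymm hle (hj0min j hαj)
        · subst hji; simp
        · rw [if_neg (asymm hji), if_pos hji, coeff_neg, coeff_Eop, if_neg, neg_zero]
          intro hall
          have hz := hall j0 hj0lt
          rw [Finsupp.tsub_apply, Finsupp.single_apply,
            if_neg (lt_trans hj0lt hji).ne'] at hz
          simp only [Nat.sub_zero] at hz
          exact hj0ne hz
      · rfl
  · -- case B : α k = 0 for all k < i
    push_neg at hA
    have hβ := congrArg (coeff (α + Finsupp.single i 1)) h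
    rw [coeff_sum, coeff_zero] at hβ
    have hu : ∀ k, coeff (α + Finsupp.single i 1) (X k * a k) =
        (if k = i then coeff α (a i) else 0) - coeff α (dmat a i k * X k) := by
      intro k
      rw [coeff_X_mul', hterm]
      rcases lt_trichotomy k i with hki | hki | hki
      · have h1 : α k = 0 := hA k hki
        rw [if_neg, if_neg (ne_of_lt hki), if_neg (by simpa using h1), sub_zero]
        rw [Finsupp.mem_support_iff, Finsupp.add_apply, Finsupp.single_apply,
          if_neg (ne_of_gt hki)]
        simp [h1]
      · subst hki
        have hmem : k ∈ (α + Finsupp.single k 1).support := by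
          rw [Finsupp.mem_support_iff, Finsupp.add_apply, Finsupp.single_apply, if_pos rfl]
          omega
        rw [if_pos hmem, if_pos rfl, dmat_diag]
        simp
      · by_cases hαk : α k = 0
        · rw [if_neg, if_neg (ne_of_gt hki), if_neg (by simpa using hαk), sub_zero]
          rw [Finsupp.mem_support_iff, Finsupp.add_apply, Finsupp.single_apply,
            if_neg (ne_of_lt hki)]
          simp [hαk]
        · rw [if_pos, if_neg (ne_of_gt hki), if_pos (by simpa using hαk), zero_sub]
          · unfold dmat
            rw [if_neg (asymm hki), if_pos hki, coeff_neg, coeff_Eop, if_pos, neg_neg]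
            · congr 1
              ext x
              simp only [Finsupp.add_apply, Finsupp.tsub_apply, Finsupp.single_apply]
              rcases eq_or_ne k x with rfl | hkx
              · rw [if_neg (ne_of_lt hki)]
                simp only [if_pos rfl]
                have := Nat.one_le_iff_ne_zero.mpr hαk
                omega
              · rw [if_neg hkx]
                split_ifs <;> omega
            · intro m hm
              rw [Finsupp.tsub_apply, Finsupp.single_apply,
                if_neg (ne_of_gt (lt_trans hm hki)), hA m hm]
              rfl
          · rw [Finsupp.mem_support_iff, Finsupp.add_apply, Finsupp.single_apply,
              if_neg (ne_of_lt hki)]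
            simpa using hαk
    rw [Finset.sum_congr rfl (fun k _ => hu k), Finset.sum_sub_distrib,
      Finset.sum_ite_eq' Finset.univ i (fun _ => coeff α (a i))] at hβ
    simp only [Finset.mem_univ, if_pos] at hβ
    exact sub_eq_zero.mp hβ

lemma pderiv_sq (k j : Fin N) :
    (pderiv k) ((X j : MvPolynomial (Fin N) R) ^ 2) = if j = k then 2 * X j else 0 := by
  rw [pow_two, Derivation.leibniz, pderiv_X, Pi.single_apply]
  split_ifs with h
  · rw [smul_eq_mul]; ring
  · simp

lemma pderiv_XX (k : Fin N) : (pderiv k) (XX R N) = 2 * X k := by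
  unfold XX
  rw [map_sum, Finset.sum_congr rfl (fun j _ => pderiv_sq k j),
    Finset.sum_ite_eq' Finset.univ k (fun j => 2 * X j), if_pos (Finset.mem_univ k)]

lemma rot_XX (j k : Fin N) : rot j k (XX R N) = 0 := by
  rw [rot, pderiv_XX, pderiv_XX]; ring

lemma derivation_eq_sum (D : Derivation R (MvPolynomial (Fin N) R) (MvPolynomial (Fin N) R))
    (p : MvPolynomial (Fin N) R) :
    D p = ∑ i, D (X i) * pderiv i p := by
  have heq : D = ∑ i : Fin N, D (X i) • pderiv i := by
    apply MvPolynomial.derivation_ext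
    intro j
    have h1 : ⇑(∑ i : Fin N, D (X i) • pderiv i) = ∑ i : Fin N, ⇑(D (X i) • pderiv i) :=
      map_sum (Derivation.coeFnAddMonoidHom (R := R) (A := MvPolynomial (Fin N) R)
        (M := MvPolynomial (Fin N) R)) (fun i => D (X i) • pderiv i) Finset.univ
    rw [show (∑ i : Fin N, D (X i) • pderiv i) (X j)
        = (⇑(∑ i : Fin N, D (X i) • pderiv i)) (X j) from rfl, h1, Finset.sum_apply]
    simp [Derivation.smul_apply, pderiv_X, Pi.single_apply, smul_eq_mul]
  conv_lhs => rw [heq]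
  have h1 : ⇑(∑ i : Fin N, D (X i) • pderiv i) = ∑ i : Fin N, ⇑(D (X i) • pderiv i) :=
    map_sum (Derivation.coeFnAddMonoidHom (R := R) (A := MvPolynomial (Fin N) R)
      (M := MvPolynomial (Fin N) R)) (fun i => D (X i) • pderiv i) Finset.univ
  rw [show (∑ i : Fin N, D (X i) • pderiv i) p
      = (⇑(∑ i : Fin N, D (X i) • pderiv i)) p from rfl, h1, Finset.sum_apply]
  simp [Derivation.smul_apply, smul_eq_mul]

end Aux

/-- if `2` is not a zero divisor in `R`, an `R`-linear derivation `D` on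
`R[X_1,…,X_N]` annihilates `X·X` iff it is an `R[X_1,…,X_N]`-linear combination of
the rotation generators `M_{jk}`. -/
theorem stmt3 {R : Type*} [CommRing R] {N : ℕ} (hN : 0 < N)
    (h2 : (2 : R) ∈ nonZeroDivisors R)
    (D : Derivation R (MvPolynomial (Fin N) R) (MvPolynomial (Fin N) R)) :
    D (XX R N) = 0 ↔
      ∃ c : Fin N → Fin N → MvPolynomial (Fin N) R,
        ∀ p, D p = ∑ j : Fin N, ∑ k ∈ Finset.univ.filter (fun k => j < k),
          c j k * rot j k p := by
  constructor
  · intro hD0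
    set a : Fin N → MvPolynomial (Fin N) R := fun i => D (X i) with ha
    -- from D (XX) = 0 derive the syzygy
    have hDXX : C (2 : R) * (∑ i, X i * a i) = 0 := by
      have h1 : D (XX R N) = C (2 : R) * ∑ i, X i * a i := by
        unfold XX
        rw [map_sum, Finset.mul_sum]
        apply Finset.sum_congr rfl
        intro j _
        rw [pow_two, Derivation.leibniz]
        have hC : (C (2 : R) : MvPolynomial (Fin N) R) = 2 := by
          rw [map_ofNat]
        rw [hC]
        simp only [ha, smul_eq_mul]
        ring
      rw [← h1, hD0]
    have hsyz : ∑ i, X i * a i = 0 := by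
      apply MvPolynomial.ext
      intro m
      have h3 := congrArg (coeff m) hDXX
      rw [coeff_C_mul, coeff_zero] at h3
      rw [coeff_zero]
      exact (mem_nonZeroDivisors_iff.mp h2).2 _ (by rw [mul_comm]; exact h3)
    refine ⟨fun j k => dmat a k j, fun p => ?_⟩
    set f : Fin N → Fin N → MvPolynomial (Fin N) R :=
      fun i j => dmat a i j * (X j * pderiv i p) with hf
    calc D p = ∑ i, a i * pderiv i p := derivation_eq_sum D p
      _ = ∑ i, ∑ j, f i j := by
          apply Finset.sum_congr rfl
          intro i _
          rw [syzygy a hsyz i, Finset.sum_mul]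
          exact Finset.sum_congr rfl fun j _ => mul_assoc _ _ _
      _ = ∑ i, ∑ j, ((if j < i then f i j else 0) + (if i < j then f i j else 0)) := by
          apply Finset.sum_congr rfl
          intro i _
          apply Finset.sum_congr rfl
          intro j _
          rcases lt_trichotomy j i with h | h | h
          · rw [if_pos h, if_neg (asymm h), add_zero]
          · subst h
            rw [if_neg (lt_irrefl j)]
            simp [hf, dmat_diag]
          · rw [if_neg (asymm h), if_pos h, zero_add]
      _ = (∑ i, ∑ j, if j < i then f i j else 0) + ∑ i, ∑ j, if i < j then f i j else 0 := by
          rw [← Finset.sum_add_distrib]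
          exact Finset.sum_congr rfl fun i _ => Finset.sum_add_distrib
      _ = (∑ j, ∑ i, if j < i then f i j else 0) + ∑ j, ∑ k, if j < k then f j k else 0 := by
          rw [Finset.sum_comm]
      _ = ∑ j, ∑ k, if j < k then f k j + f j k else 0 := by
          rw [← Finset.sum_add_distrib]
          apply Finset.sum_congr rfl
          intro j _
          rw [← Finset.sum_add_distrib]
          apply Finset.sum_congr rfl
          intro k _
          split_ifs <;> simp
      _ = ∑ j, ∑ k ∈ Finset.univ.filter (fun k => j < k), (f k j + f j k) := by
          exact Finset.sum_congr rfl fun j _ => (Finset.sum_filter _ _).symm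
      _ = ∑ j : Fin N, ∑ k ∈ Finset.univ.filter (fun k => j < k),
            dmat a k j * rot j k p := by
          apply Finset.sum_congr rfl
          intro j _
          apply Finset.sum_congr rfl
          intro k _
          show dmat a k j * (X j * (pderiv k) p) + dmat a j k * (X k * (pderiv j) p)
            = dmat a k j * rot j k p
          rw [rot, dmat_skew a k j]
          ring
  · rintro ⟨c, hc⟩
    rw [hc (XX R N)]
    apply Finset.sum_eq_zero
    intro j _
    apply Finset.sum_eq_zero
    intro k _
    rw [rot_XX, mul_zero]
end

section
/- Let c ∈ R be an element that is not a zero divisor. If p ∈ R[X_1,…,X_N] is homogeneous (of some degree) and p lies in the ideal generated by X·X − c (i.e., p = (X·X − c)·q for some q), then p = 0. Consequently, the quotient map R[X_1,…,X_N] → R[X_1,…,X_N]/(X·X − c) is injective on homogeneous polynomials of any fixed degree. -/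
open MvPolynomial

/-- auxiliary: `X·X` is homogeneous of degree 2. -/
lemma XX_isHomogeneous (R : Type*) [CommRing R] (N : ℕ) :
    (XX R N).IsHomogeneous 2 :=
  IsHomogeneous.sum _ _ _ fun j _ => isHomogeneous_X_pow j 2

/-- auxiliary: `X·X` is a nonzerodivisor. -/
lemma XX_mul_eq_zero {R : Type*} [CommRing R] {n : ℕ}
    (a : MvPolynomial (Fin (n + 1)) R) (h : XX R (n + 1) * a = 0) : a = 0 := by
  have h2 : (finSuccEquiv R n) (XX R (n + 1)) * (finSuccEquiv R n) a = 0 := by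
    rw [← map_mul, h, map_zero]
  have hm : (Polynomial.X ^ 2 + Polynomial.C (∑ j : Fin n, X j ^ 2) :
      Polynomial (MvPolynomial (Fin n) R)).Monic :=
    Polynomial.monic_X_pow_add (by
      apply lt_of_le_of_lt Polynomial.degree_C_le; norm_num)
  have : (finSuccEquiv R n) a = 0 := by
    rw [show (finSuccEquiv R n) (XX R (n + 1)) = _ from ?_] at h2
    · exact hm.mul_right_eq_zero_iff.mp h2
    · simp [XX, Fin.sum_univ_succ, finSuccEquiv_X_zero, finSuccEquiv_X_succ, map_sum]
  exact (finSuccEquiv R n).injective (by simpa using this)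

/-- auxiliary: homogeneous component of a product with a homogeneous polynomial. -/
lemma homogeneousComponent_homog_mul {σ : Type*} {R : Type*} [CommRing R] {n : ℕ}
    {r : MvPolynomial σ R} (hr : r.IsHomogeneous n) (q : MvPolynomial σ R) (m : ℕ) :
    homogeneousComponent (n + m) (r * q) = r * homogeneousComponent m q := by
  conv_lhs => rw [← sum_homogeneousComponent q, Finset.mul_sum, map_sum]
  have key : ∀ i ∈ Finset.range (q.totalDegree + 1),
      homogeneousComponent (n + m) (r * homogeneousComponent i q) =
        r * homogeneousComponent m (homogeneousComponent i q) := by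
    intro i _
    have hri : (r * homogeneousComponent i q).IsHomogeneous (n + i) :=
      hr.mul (homogeneousComponent_isHomogeneous i q)
    rw [homogeneousComponent_of_mem ((mem_homogeneousSubmodule _ _).mpr hri),
        homogeneousComponent_of_mem (homogeneousComponent_mem i q)]
    by_cases h : i = m
    · subst h; simp
    · rw [if_neg (by omega), if_neg (by omega), mul_zero]
  rw [Finset.sum_congr rfl key, ← Finset.mul_sum, ← map_sum, sum_homogeneousComponent]

/-- auxiliary: low homogeneous components of a product with a homogeneous polynomial vanish. -/
lemma homogeneousComponent_homog_mul_low {σ : Type*} {R : Type*} [CommRing R] {n : ℕ}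
    {r : MvPolynomial σ R} (hr : r.IsHomogeneous n) (q : MvPolynomial σ R) {e : ℕ}
    (he : e < n) : homogeneousComponent e (r * q) = 0 := by
  conv_lhs => rw [← sum_homogeneousComponent q, Finset.mul_sum, map_sum]
  apply Finset.sum_eq_zero
  intro i _
  have hri : (r * homogeneousComponent i q).IsHomogeneous (n + i) :=
    hr.mul (homogeneousComponent_isHomogeneous i q)
  rw [homogeneousComponent_of_mem ((mem_homogeneousSubmodule _ _).mpr hri),
      if_neg (by omega)]

/-- auxiliary: cancellation by `C c` for a nonzerodivisor `c`. -/
lemma C_mul_eq_zero {σ : Type*} {R : Type*} [CommRing R] {c : R}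
    (hc : c ∈ nonZeroDivisors R) (a : MvPolynomial σ R) (h : C c * a = 0) : a = 0 := by
  ext d
  have := congrArg (coeff d) h
  rw [coeff_C_mul, coeff_zero] at this
  simpa using hc.2 _ (by rwa [mul_comm] at this)

/-- if `c` is not a zero divisor, the only homogeneous polynomial in the
ideal generated by `X·X − c` is `0`; consequently the quotient map is injective on
homogeneous polynomials of any fixed degree. -/
theorem stmt9 {R : Type*} [CommRing R] {N : ℕ} (hN : 2 ≤ N)
    (c : R) (hc : c ∈ nonZeroDivisors R) :
    (∀ (d : ℕ) (p : MvPolynomial (Fin N) R), p.IsHomogeneous d →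
      p ∈ Ideal.span {XX R N - C c} → p = 0) ∧
    (∀ (d : ℕ) (p₁ p₂ : MvPolynomial (Fin N) R),
      p₁.IsHomogeneous d → p₂.IsHomogeneous d →
      Ideal.Quotient.mk (Ideal.span {XX R N - C c}) p₁ =
        Ideal.Quotient.mk (Ideal.span {XX R N - C c}) p₂ →
      p₁ = p₂) := by
  obtain ⟨n, rfl⟩ : ∃ n, N = n + 1 := ⟨N - 1, by omega⟩
  have main : ∀ (d : ℕ) (p : MvPolynomial (Fin (n + 1)) R), p.IsHomogeneous d →
      p ∈ Ideal.span {XX R (n + 1) - C c} → p = 0 := by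
    intro d p hp hmem
    rw [Ideal.mem_span_singleton] at hmem
    obtain ⟨q, hq⟩ := hmem
    have hXX := XX_isHomogeneous R (n + 1)
    -- the component equations
    have eqn : ∀ e : ℕ,
        (if e = d then p else 0) =
          homogeneousComponent e (XX R (n + 1) * q) - C c * homogeneousComponent e q := by
      intro e
      have := congrArg (homogeneousComponent e) hq
      rw [homogeneousComponent_of_mem ((mem_homogeneousSubmodule _ _).mpr hp)] at this
      rw [this, sub_mul, map_sub, homogeneousComponent_C_mul]
    -- high components of q vanish
    have high : ∀ j m : ℕ, q.totalDegree + 1 - m ≤ j → d ≤ m + 1 →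
        homogeneousComponent m q = 0 := by
      intro j
      induction j with
      | zero =>
        intro m hm _
        exact homogeneousComponent_eq_zero m q (by omega)
      | succ j ih =>
        intro m hm hd
        rcases le_or_gt m q.totalDegree with h | h
        · have e1 := eqn (m + 2)
          rw [if_neg (by omega), ih (m + 2) (by omega) (by omega), mul_zero, sub_zero,
              show m + 2 = 2 + m by ring, homogeneousComponent_homog_mul hXX] at e1
          exact XX_mul_eq_zero _ e1.symm
        · exact homogeneousComponent_eq_zero m q h
    -- low components of q vanish
    have low : ∀ m : ℕ, m < d → homogeneousComponent m q = 0 := by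
      intro m
      induction m using Nat.strong_induction_on with
      | _ m ih =>
        intro hmd
        have e1 := eqn m
        rw [if_neg (by omega)] at e1
        rcases lt_or_ge m 2 with h2 | h2
        · rw [homogeneousComponent_homog_mul_low hXX q h2] at e1
          rw [zero_sub] at e1
          exact C_mul_eq_zero hc _ (neg_eq_zero.mp e1.symm)
        · rw [show m = 2 + (m - 2) by omega, homogeneousComponent_homog_mul hXX,
              ih (m - 2) (by omega) (by omega), mul_zero] at e1
          rw [zero_sub] at e1
          have : C c * homogeneousComponent (2 + (m - 2)) q = 0 := neg_eq_zero.mp e1.symm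
          rw [show m = 2 + (m - 2) by omega]
          exact C_mul_eq_zero hc _ this
    have hqz : q = 0 := by
      rw [← sum_homogeneousComponent q]
      apply Finset.sum_eq_zero
      intro i _
      rcases lt_or_ge i d with h | h
      · exact low i h
      · exact high (q.totalDegree + 1) i (by omega) (by omega)
    rw [hq, hqz, mul_zero]
  refine ⟨main, fun d p₁ p₂ h₁ h₂ hq => ?_⟩
  rw [Ideal.Quotient.eq] at hq
  have := main d (p₁ - p₂) (h₁.sub h₂) hq
  exact sub_eq_zero.mp this
end
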